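/- Let σ : SL(2,ℤ) → SL(2,ℤ) be the group automorphism sending [[a,b],[c,d]] to [[a,-b],[-c,d]] (conjugation by diag(-1,1)). Then the image of G₁ under σ equals the conjugate subgroup T·G₁·T⁻¹. -/

import Mathlib

open Matrix

/-- `SL(2,ℤ)`, the group of 2×2 integer matrices of determinant 1. -/
abbrev SL2Z := Matrix.SpecialLinearGroup (Fin 2) ℤ

/-- The matrix `T = [[1,1],[0,1]]` in `SL(2,ℤ)`. -/
def Tmat : SL2Z := ⟨!![1, 1; 0, 1], by norm_num [Matrix.det_fin_two_of]⟩

/-- The subgroup `G₁` of `SL(2,ℤ)`. -/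
def G1 : Subgroup SL2Z :=
  Subgroup.closure
    { (⟨!![1, 4; 0, 1], by norm_num [Matrix.det_fin_two_of]⟩ : SL2Z),
      ⟨!![3, -5; 2, -3], by norm_num [Matrix.det_fin_two_of]⟩,
      ⟨!![0, -1; 1, 1], by norm_num [Matrix.det_fin_two_of]⟩ }

def mA : SL2Z := ⟨!![1, 4; 0, 1], by norm_num [Matrix.det_fin_two_of]⟩
def mB : SL2Z := ⟨!![3, -5; 2, - 3], by norm_num [Matrix.det_fin_two_of]⟩
def mR : SL2Z := ⟨!![0, -1; 1, 1], by norm_num [Matrix.det_fin_two_of]⟩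
def sA : SL2Z := ⟨!![1, -4; 0, 1], by norm_num [Matrix.det_fin_two_of]⟩
def sB : SL2Z := ⟨!![3, 5; -2, -3], by norm_num [Matrix.det_fin_two_of]⟩
def sR : SL2Z := ⟨!![0, 1; -1, 1], by norm_num [Matrix.det_fin_two_of]⟩
def cB : SL2Z := ⟨!![5, -13; 2, -5], by norm_num [Matrix.det_fin_two_of]⟩
def cR : SL2Z := ⟨!![1, -1; 1, 0], by norm_num [Matrix.det_fin_two_of]⟩

lemma e1 : sA * mA = 1 := by
  apply Subtype.ext
  simp only [Matrix.SpecialLinearGroup.coe_mul]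
  simp [sA, mA, Matrix.mul_fin_two, Matrix.one_fin_two]

lemma e2 : cB * (mA * sB) = mA := by
  apply Subtype.ext
  simp only [Matrix.SpecialLinearGroup.coe_mul]
  simp [cB, mA, sB, Matrix.mul_fin_two]

lemma e3 : sR * cR = 1 := by
  apply Subtype.ext
  simp only [Matrix.SpecialLinearGroup.coe_mul]
  simp [sR, cR, Matrix.mul_fin_two, Matrix.one_fin_two]

lemma tA : Tmat * mA = mA * Tmat := by
  apply Subtype.ext
  simp only [Matrix.SpecialLinearGroup.coe_mul]
  simp [Tmat, mA, Matrix.mul_fin_two]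

lemma tB : Tmat * mB = cB * Tmat := by
  apply Subtype.ext
  simp only [Matrix.SpecialLinearGroup.coe_mul]
  simp [Tmat, mB, cB, Matrix.mul_fin_two]

lemma tR : Tmat * mR = cR * Tmat := by
  apply Subtype.ext
  simp only [Matrix.SpecialLinearGroup.coe_mul]
  simp [Tmat, mR, cR, Matrix.mul_fin_two]

/-- If `σ` is the group automorphism of `SL(2,ℤ)` sending `[[a,b],[c,d]]` to
`[[a,-b],[-c,d]]` (conjugation by `diag(-1,1)`), then `σ(G₁) = T·G₁·T⁻¹`. -/
theorem sigma_G1_eq_conj (σ : SL2Z ≃* SL2Z)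
    (hσ : ∀ g : SL2Z,
      ((σ g : SL2Z) : Matrix (Fin 2) (Fin 2) ℤ) = !![g 0 0, -(g 0 1); -(g 1 0), g 1 1]) :
    Subgroup.map σ.toMonoidHom G1 = Subgroup.map (MulAut.conj Tmat).toMonoidHom G1 := by
  have hσA : σ mA = sA := by
    apply Subtype.ext
    rw [hσ]
    simp [mA, sA]
  have hσB : σ mB = sB := by
    apply Subtype.ext
    rw [hσ]
    simp [mB, sB]
  have hσR : σ mR = sR := by
    apply Subtype.ext
    rw [hσ]
    simp [mR, sR]
  have hcA : MulAut.conj Tmat mA = mA := by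
    rw [MulAut.conj_apply, tA, mul_inv_cancel_right]
  have hcB : MulAut.conj Tmat mB = cB := by
    rw [MulAut.conj_apply, tB, mul_inv_cancel_right]
  have hcR : MulAut.conj Tmat mR = cR := by
    rw [MulAut.conj_apply, tR, mul_inv_cancel_right]
  have hG1 : G1 = Subgroup.closure {mA, mB, mR} := rfl
  have key : Subgroup.closure ({sA, sB, sR} : Set SL2Z)
      = Subgroup.closure ({mA, cB, cR} : Set SL2Z) := by
    have hmA : mA ∈ Subgroup.closure ({mA, cB, cR} : Set SL2Z) :=
      Subgroup.subset_closure (by simp)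
    have hcB' : cB ∈ Subgroup.closure ({mA, cB, cR} : Set SL2Z) :=
      Subgroup.subset_closure (by simp)
    have hcR' : cR ∈ Subgroup.closure ({mA, cB, cR} : Set SL2Z) :=
      Subgroup.subset_closure (by simp)
    have hsA : sA ∈ Subgroup.closure ({sA, sB, sR} : Set SL2Z) :=
      Subgroup.subset_closure (by simp)
    have hsB : sB ∈ Subgroup.closure ({sA, sB, sR} : Set SL2Z) :=
      Subgroup.subset_closure (by simp)
    have hsR : sR ∈ Subgroup.closure ({sA, sB, sR} : Set SL2Z) :=
      Subgroup.subset_closure (by simp)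
    have eqA : sA = mA⁻¹ := eq_inv_of_mul_eq_one_left e1
    have eqR : sR = cR⁻¹ := eq_inv_of_mul_eq_one_left e3
    have e2' : (cB * mA) * sB = mA := by rw [mul_assoc]; exact e2
    have eqB : sB = (cB * mA)⁻¹ * mA := by rw [eq_inv_mul_iff_mul_eq]; exact e2'
    have eqA' : mA = sA⁻¹ := eq_inv_of_mul_eq_one_right e1
    have eqR' : cR = sR⁻¹ := eq_inv_of_mul_eq_one_right e3
    have eqB' : cB = mA * (mA * sB)⁻¹ := by rw [eq_mul_inv_iff_mul_eq]; exact e2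
    apply le_antisymm <;> rw [Subgroup.closure_le] <;>
      simp only [Set.insert_subset_iff, Set.singleton_subset_iff, SetLike.mem_coe]
    · exact ⟨by rw [eqA]; exact inv_mem hmA,
        by rw [eqB]; exact mul_mem (inv_mem (mul_mem hcB' hmA)) hmA,
        by rw [eqR]; exact inv_mem hcR'⟩
    · refine ⟨by rw [eqA']; exact inv_mem hsA, ?_, by rw [eqR']; exact inv_mem hsR⟩
      have hmA' : mA ∈ Subgroup.closure ({sA, sB, sR} : Set SL2Z) := by
        rw [eqA']; exact inv_mem hsA
      rw [eqB']
      exact mul_mem hmA' (inv_mem (mul_mem hmA' hsB))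
  rw [hG1, MonoidHom.map_closure, MonoidHom.map_closure]
  have h1 : ⇑σ.toMonoidHom '' {mA, mB, mR} = {sA, sB, sR} := by
    simp [Set.image_insert_eq, hσA, hσB, hσR]
  have h2 : ⇑(MulAut.conj Tmat).toMonoidHom '' {mA, mB, mR} = {mA, cB, cR} := by
    rw [Set.image_insert_eq, Set.image_insert_eq, Set.image_singleton]
    simp only [MulEquiv.coe_toMonoidHom]
    rw [hcA, hcB, hcR]
  rw [h1, h2, key]
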